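/- Let a, b, c > 0 and δ₁, δ₂ > 0 be constants, and consider the scalar differential equation v̇(t) = -a·v(t)² + b·v(t)·e^{-δ₁ t} + c·e^{-δ₂ t} with initial condition v(t₀) = v₀, where t₀ ≥ 0 and v₀ ≥ 0. Then every maximal solution is defined on all of [t₀, ∞), is bounded on [t₀, ∞), and satisfies lim_{t→∞} v(t) = 0. -/

import Mathlib

open Set Filter Real Topology

/-- If `v` has negative derivative within `S` at `s` and `Ioo p s ⊆ S`, then some point
just left of `s` has strictly bigger value. -/
lemma left_val_gt {v : ℝ → ℝ} {d s p : ℝ} {S : Set ℝ}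
    (hv : HasDerivWithinAt v d S s) (hd : d < 0) (hp : p < s) (hsub : Ioo p s ⊆ S) :
    ∃ x ∈ Ioo p s, v s < v x := by
  have hslope := hasDerivWithinAt_iff_tendsto_slope.mp hv
  have hle : 𝓝[Ioo p s] s ≤ 𝓝[S \ {s}] s := by
    apply nhdsWithin_mono
    intro x hx
    exact ⟨hsub hx, by exact ne_of_lt hx.2⟩
  have h2 : Tendsto (slope v s) (𝓝[Ioo p s] s) (𝓝 d) := hslope.mono_left hle
  have hev : ∀ᶠ x in 𝓝[Ioo p s] s, slope v s x < 0 :=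
    h2.eventually (eventually_lt_nhds hd)
  have hme : ∀ᶠ x in 𝓝[Ioo p s] s, x ∈ Ioo p s := eventually_mem_nhdsWithin
  have : NeBot (𝓝[Ioo p s] s) := right_nhdsWithin_Ioo_neBot hp
  obtain ⟨x, hx1, hx2⟩ := (hev.and hme).exists
  refine ⟨x, hx2, ?_⟩
  have hxs : x - s < 0 := sub_neg.mpr hx2.2
  rw [slope_def_field] at hx1
  rcases div_neg_iff.mp hx1 with ⟨h1, h2⟩ | ⟨h1, h2⟩ <;> linarith

/-- If `v` has positive derivative within `S` at `s`, some point just left has smaller value. -/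
lemma left_val_lt {v : ℝ → ℝ} {d s p : ℝ} {S : Set ℝ}
    (hv : HasDerivWithinAt v d S s) (hd : 0 < d) (hp : p < s) (hsub : Ioo p s ⊆ S) :
    ∃ x ∈ Ioo p s, v x < v s := by
  obtain ⟨x, hx, hval⟩ := left_val_gt (v := fun t => -(v t)) (d := -d) (S := S) hv.neg
    (by linarith) hp hsub
  exact ⟨x, hx, by linarith⟩

section Main

variable {a b c δ₁ δ₂ : ℝ} (ha : 0 < a) (hb : 0 < b) (hc : 0 < c) (hδ₁ : 0 < δ₁) (hδ₂ : 0 < δ₂)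

/-- The positive root of `a x² = b x + c`. -/
noncomputable def rroot (a b c : ℝ) : ℝ := (b + Real.sqrt (b ^ 2 + 4 * a * c)) / (2 * a)

include ha hb hc in
lemma rroot_nonneg : 0 ≤ rroot a b c := by
  have := Real.sqrt_nonneg (b ^ 2 + 4 * a * c)
  have : (0:ℝ) ≤ b + Real.sqrt (b ^ 2 + 4 * a * c) := by linarith
  exact div_nonneg this (by linarith)

include ha hb hc in
lemma quad_neg {x : ℝ} (hx : rroot a b c < x) : b * x + c < a * x ^ 2 := by
  set s := Real.sqrt (b ^ 2 + 4 * a * c) with hs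
  have hs0 : 0 ≤ s := Real.sqrt_nonneg _
  have hs2 : s ^ 2 = b ^ 2 + 4 * a * c := Real.sq_sqrt (by nlinarith)
  have hx' : 2 * a * x > b + s := by
    have := (div_lt_iff₀ (by linarith : (0:ℝ) < 2 * a)).mp hx
    linarith
  nlinarith [sq_nonneg (2 * a * x - b - s)]

/-- The right-hand side of the ODE. -/
noncomputable def Frhs (a b c δ₁ δ₂ : ℝ) : ℝ → ℝ → ℝ :=
  fun t x => -a * x ^ 2 + b * x * Real.exp (-δ₁ * t) + c * Real.exp (-δ₂ * t)

include ha hb hc hδ₁ hδ₂ in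
lemma Frhs_neg_of_gt {t x : ℝ} (ht : 0 ≤ t) (hx : rroot a b c < x) :
    Frhs a b c δ₁ δ₂ t x < 0 := by
  have hr0 : 0 ≤ rroot a b c := rroot_nonneg ha hb hc
  have hx0 : 0 < x := lt_of_le_of_lt hr0 hx
  have he1 : Real.exp (-δ₁ * t) ≤ 1 := Real.exp_le_one_iff.mpr (by nlinarith)
  have he2 : Real.exp (-δ₂ * t) ≤ 1 := Real.exp_le_one_iff.mpr (by nlinarith)
  have he1' : 0 < Real.exp (-δ₁ * t) := Real.exp_pos _
  have he2' : 0 < Real.exp (-δ₂ * t) := Real.exp_pos _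
  have hq := quad_neg ha hb hc hx
  have : Frhs a b c δ₁ δ₂ t x ≤ -a * x ^ 2 + b * x + c := by
    unfold Frhs
    have h1 : b * x * Real.exp (-δ₁ * t) ≤ b * x * 1 :=
      mul_le_mul_of_nonneg_left he1 (by positivity)
    have h2 : c * Real.exp (-δ₂ * t) ≤ c * 1 := mul_le_mul_of_nonneg_left he2 hc.le
    linarith
  linarith

include ha hb hc hδ₁ hδ₂ in
lemma invariance {τ p : ℝ} (hτ : 0 ≤ τ) {v : ℝ → ℝ}
    (hv : ∀ t ∈ Icc τ p, HasDerivWithinAt v (Frhs a b c δ₁ δ₂ t (v t)) (Icc τ p) t)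
    (h0 : 0 ≤ v τ) :
    ∀ t ∈ Icc τ p, v t ∈ Icc 0 (max (v τ) (rroot a b c)) := by
  set B := max (v τ) (rroot a b c) with hB
  have hcont : ContinuousOn v (Icc τ p) := fun t ht => (hv t ht).continuousWithinAt
  -- upper bound
  have hub : ∀ t ∈ Icc τ p, v t ≤ B := by
    have key : ∀ ε > 0, ∀ t ∈ Icc τ p, v t < B + ε := by
      intro ε hε
      by_contra h
      push_neg at h
      obtain ⟨t₁, ht₁, ht₁v⟩ := h
      set S := Icc τ p ∩ v ⁻¹' Ici (B + ε) with hS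
      have hSc : IsClosed S := hcont.preimage_isClosed_of_isClosed isClosed_Icc isClosed_Ici
      have hSne : S.Nonempty := ⟨t₁, ht₁, ht₁v⟩
      have hSb : BddBelow S := ⟨τ, fun x hx => hx.1.1⟩
      set s := sInf S with hsdef
      have hs : s ∈ S := hSc.csInf_mem hSne hSb
      have hvs : B + ε ≤ v s := hs.2
      have hτs : τ < s := by
        rcases lt_or_eq_of_le hs.1.1 with h' | h'
        · exact h'
        · exfalso; have hle : v τ ≤ B := le_max_left _ _
          rw [← h'] at hvs; linarith
      have hd : Frhs a b c δ₁ δ₂ s (v s) < 0 := by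
        apply Frhs_neg_of_gt ha hb hc hδ₁ hδ₂ (by linarith)
        have hle : rroot a b c ≤ B := le_max_right _ _
        linarith
      obtain ⟨x, hx, hvx⟩ := left_val_gt (hv s hs.1) hd hτs
        (fun y hy => ⟨hy.1.le, le_trans hy.2.le hs.1.2⟩)
      have hxS : x ∈ S := ⟨⟨hx.1.le, le_trans hx.2.le hs.1.2⟩, by
        simp only [mem_preimage, mem_Ici]; linarith⟩
      have := csInf_le hSb hxS
      rw [← hsdef] at this; linarith [hx.2]
    intro t ht
    by_contra h
    push_neg at h
    have := key ((v t - B) / 2) (by linarith) t ht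
    linarith
  -- lower bound
  have hlb : ∀ t ∈ Icc τ p, 0 ≤ v t := by
    by_contra h
    push_neg at h
    obtain ⟨t₁, ht₁, ht₁v⟩ := h
    set m := c * Real.exp (-δ₂ * p) with hm
    have hm0 : 0 < m := by positivity
    set ε := min (min 1 (-v t₁)) (m / (2 * (a + b))) with hεdef
    have hε : 0 < ε := by
      apply lt_min (lt_min one_pos (by linarith)) (by positivity)
    have hε1 : ε ≤ 1 := le_trans (min_le_left _ _) (min_le_left _ _)
    have hεv : ε ≤ -v t₁ := le_trans (min_le_left _ _) (min_le_right _ _)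
    have hεm : ε ≤ m / (2 * (a + b)) := min_le_right _ _
    set S := Icc τ p ∩ v ⁻¹' Iic (-ε) with hS
    have hSc : IsClosed S := hcont.preimage_isClosed_of_isClosed isClosed_Icc isClosed_Iic
    have hSne : S.Nonempty := ⟨t₁, ht₁, by simp only [mem_preimage, mem_Iic]; linarith⟩
    have hSb : BddBelow S := ⟨τ, fun x hx => hx.1.1⟩
    set s := sInf S with hsdef
    have hs : s ∈ S := hSc.csInf_mem hSne hSb
    have hvs_le : v s ≤ -ε := hs.2
    have hτs : τ < s := by
      rcases lt_or_eq_of_le hs.1.1 with h' | h'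
      · exact h'
      · exfalso; rw [← h'] at hvs_le; linarith
    have hnotS : ∀ x ∈ Ioo τ s, -ε < v x := by
      intro x hxm
      by_contra hcon
      push_neg at hcon
      have hxS : x ∈ S := ⟨⟨hxm.1.le, le_trans hxm.2.le hs.1.2⟩, hcon⟩
      have := csInf_le hSb hxS
      rw [← hsdef] at this; linarith [hxm.2]
    have hvs_ge : -ε ≤ v s := by
      have hne : NeBot (𝓝[Ioo τ s] s) := right_nhdsWithin_Ioo_neBot hτs
      have hcw : Tendsto v (𝓝[Ioo τ s] s) (𝓝 (v s)) :=
        ((hcont s hs.1).mono (fun y hy => ⟨hy.1.le, le_trans hy.2.le hs.1.2⟩)).tendsto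
      apply ge_of_tendsto hcw
      filter_upwards [eventually_mem_nhdsWithin] with x hxm
      exact (hnotS x hxm).le
    have hvs : v s = -ε := le_antisymm hvs_le hvs_ge
    have hsp : s ≤ p := hs.1.2
    have he2 : Real.exp (-δ₂ * p) ≤ Real.exp (-δ₂ * s) :=
      Real.exp_le_exp.mpr (by nlinarith)
    have he1 : Real.exp (-δ₁ * s) ≤ 1 := Real.exp_le_one_iff.mpr (by nlinarith)
    have he1' : 0 < Real.exp (-δ₁ * s) := Real.exp_pos _
    have hd : 0 < Frhs a b c δ₁ δ₂ s (v s) := by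
      unfold Frhs
      rw [hvs]
      have h1 : b * -ε * Real.exp (-δ₁ * s) ≥ -(b * ε) := by nlinarith [mul_le_mul_of_nonneg_left he1 (mul_pos hb hε).le]
      have h2 : c * Real.exp (-δ₂ * s) ≥ m := by rw [hm]; nlinarith
      have h3 : -a * (-ε) ^ 2 ≥ -(a * ε) := by nlinarith [mul_le_mul_of_nonneg_left hε1 (mul_pos ha hε).le]
      have h4 : (a + b) * ε ≤ m / 2 := by
        rw [le_div_iff₀ (by positivity : (0:ℝ) < 2 * (a + b))] at hεm
        linarith [hεm]
      linarith
    obtain ⟨x, hx, hvx⟩ := left_val_lt (hv s hs.1) hd hτs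
      (fun y hy => ⟨hy.1.le, le_trans hy.2.le hs.1.2⟩)
    have := hnotS x hx
    rw [hvs] at hvx; linarith
  exact fun t ht => ⟨hlb t ht, hub t ht⟩

/-- Bound for the RHS on the region of interest. -/
noncomputable def Cbound (a b c B : ℝ) : ℝ := a * (B + 1) ^ 2 + b * (B + 1) + c

/-- Uniform time step for local existence. -/
noncomputable def hstep (a b c B : ℝ) : ℝ := 1 / (Cbound a b c B + 1)

include ha hb hc in
lemma Cbound_pos {B : ℝ} (hB0 : 0 ≤ B) : 0 < Cbound a b c B := by
  unfold Cbound; positivity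

include ha hb hc in
lemma hstep_pos {B : ℝ} (hB0 : 0 ≤ B) : 0 < hstep a b c B := by
  unfold hstep
  have := Cbound_pos ha hb hc hB0
  positivity

include ha hb hc hδ₁ hδ₂ in
lemma locex {B : ℝ} (hB0 : 0 ≤ B) {τ x₀ : ℝ} (hτ : 0 ≤ τ) (hx₀ : x₀ ∈ Icc 0 B) :
    ∃ g : ℝ → ℝ, g τ = x₀ ∧ ∀ t ∈ Icc τ (τ + hstep a b c B),
      HasDerivWithinAt g (Frhs a b c δ₁ δ₂ t (g t)) (Icc τ (τ + hstep a b c B)) t := by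
  set C := Cbound a b c B with hC
  have hC0 : 0 < C := Cbound_pos ha hb hc hB0
  set h := hstep a b c B with hh
  have hh0 : 0 < h := hstep_pos ha hb hc hB0
  set L : NNReal := Real.toNNReal (2 * a * (B + 1) + b) with hL
  have habs : ∀ x : ℝ, x ∈ Metric.closedBall x₀ 1 → |x| ≤ B + 1 := by
    intro x hx
    rw [Metric.mem_closedBall, Real.dist_eq] at hx
    have h1 : |x| - |x₀| ≤ |x - x₀| := abs_sub_abs_le_abs_sub _ _
    have h2 : |x₀| ≤ B := abs_le.mpr ⟨by linarith [hx₀.1], hx₀.2⟩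
    linarith
  have hexp1 : ∀ t : ℝ, τ ≤ t → Real.exp (-δ₁ * t) ≤ 1 := fun t ht =>
    Real.exp_le_one_iff.mpr (by nlinarith)
  have hexp2 : ∀ t : ℝ, τ ≤ t → Real.exp (-δ₂ * t) ≤ 1 := fun t ht =>
    Real.exp_le_one_iff.mpr (by nlinarith)
  have hpl : IsPicardLindelof (Frhs a b c δ₁ δ₂) (tmin := τ) (tmax := τ + h)
      ⟨τ, ⟨le_refl _, by linarith⟩⟩ x₀ 1 0 ⟨C, hC0.le⟩ L := by
    constructor
    · intro t ht
      rw [lipschitzOnWith_iff_dist_le_mul]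
      intro x hx y hy
      rw [Real.dist_eq, Real.dist_eq]
      have hex : |x| ≤ B + 1 := habs x hx
      have hey : |y| ≤ B + 1 := habs y hy
      have he1 : Real.exp (-δ₁ * t) ≤ 1 := hexp1 t ht.1
      have he1' : 0 < Real.exp (-δ₁ * t) := Real.exp_pos _
      have hfact : Frhs a b c δ₁ δ₂ t x - Frhs a b c δ₁ δ₂ t y
          = (x - y) * (-a * (x + y) + b * Real.exp (-δ₁ * t)) := by
        unfold Frhs; ring
      have hcoe : (L : ℝ) = 2 * a * (B + 1) + b := by
        rw [hL]; exact Real.coe_toNNReal _ (by positivity)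
      calc |Frhs a b c δ₁ δ₂ t x - Frhs a b c δ₁ δ₂ t y|
          = |x - y| * |(-a * (x + y) + b * Real.exp (-δ₁ * t))| := by rw [hfact, abs_mul]
        _ ≤ |x - y| * (2 * a * (B + 1) + b) := by
            apply mul_le_mul_of_nonneg_left _ (abs_nonneg _)
            have h1 : |(-a * (x + y) + b * Real.exp (-δ₁ * t))|
                ≤ |a * (x + y)| + |b * Real.exp (-δ₁ * t)| := by
              calc _ ≤ |(-a * (x + y))| + |b * Real.exp (-δ₁ * t)| := abs_add_le _ _
                _ = |a * (x + y)| + |b * Real.exp (-δ₁ * t)| := by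
                    rw [neg_mul, abs_neg]
            have h2 : |a * (x + y)| ≤ a * (2 * (B + 1)) := by
              rw [abs_mul, abs_of_pos ha]
              apply mul_le_mul_of_nonneg_left _ ha.le
              calc |x + y| ≤ |x| + |y| := abs_add_le _ _
                _ ≤ 2 * (B + 1) := by linarith
            have h3 : |b * Real.exp (-δ₁ * t)| ≤ b := by
              rw [abs_mul, abs_of_pos hb, abs_of_pos he1']
              nlinarith
            linarith
        _ = (2 * a * (B + 1) + b) * |x - y| := by ring
        _ = (L : ℝ) * |x - y| := by rw [hcoe]
    · intro x _
      apply Continuous.continuousOn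
      unfold Frhs
      fun_prop
    · intro t ht x hx
      have hex : |x| ≤ B + 1 := habs x hx
      have he1 : Real.exp (-δ₁ * t) ≤ 1 := hexp1 t ht.1
      have he2 : Real.exp (-δ₂ * t) ≤ 1 := hexp2 t ht.1
      have he1' : 0 < Real.exp (-δ₁ * t) := Real.exp_pos _
      have he2' : 0 < Real.exp (-δ₂ * t) := Real.exp_pos _
      rw [Real.norm_eq_abs]
      calc |Frhs a b c δ₁ δ₂ t x|
          ≤ |(-a * x ^ 2)| + |b * x * Real.exp (-δ₁ * t)| + |c * Real.exp (-δ₂ * t)| := by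
            unfold Frhs
            exact (abs_add_le _ _).trans (by gcongr; exact abs_add_le _ _)
        _ ≤ a * (B + 1) ^ 2 + b * (B + 1) + c := by
            have hxsq : x ^ 2 ≤ (B + 1) ^ 2 := by nlinarith [abs_nonneg x, sq_abs x, neg_abs_le x, le_abs_self x]
            have h1 : |(-a * x ^ 2)| ≤ a * (B + 1) ^ 2 := by
              rw [neg_mul, abs_neg, abs_mul, abs_of_pos ha, abs_of_nonneg (sq_nonneg x)]
              exact mul_le_mul_of_nonneg_left hxsq ha.le
            have h2 : |b * x * Real.exp (-δ₁ * t)| ≤ b * (B + 1) := by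
              rw [abs_mul, abs_mul, abs_of_pos hb, abs_of_pos he1']
              calc b * |x| * Real.exp (-δ₁ * t) ≤ b * (B + 1) * 1 := by
                    apply mul_le_mul (mul_le_mul_of_nonneg_left hex hb.le)
                      he1 he1'.le (by positivity)
                _ = b * (B + 1) := mul_one _
            have h3 : |c * Real.exp (-δ₂ * t)| ≤ c := by
              rw [abs_mul, abs_of_pos hc, abs_of_pos he2']
              nlinarith
            linarith
        _ = C := rfl
    · show C * max (τ + h - τ) (τ - τ) ≤ 1 - 0
      rw [sub_zero]
      have hmax : max (τ + h - τ) (τ - τ) = h := by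
        rw [add_sub_cancel_left, sub_self, max_eq_left hh0.le]
      rw [hmax, hh]
      unfold hstep
      rw [mul_one_div, div_le_one (by linarith)]
      linarith
  obtain ⟨g, hg0, hg⟩ := hpl.exists_eq_forall_mem_Icc_hasDerivWithinAt₀
  exact ⟨g, hg0, hg⟩

include ha hb hc hδ₁ hδ₂ in
lemma globex {B : ℝ} (hBr : rroot a b c ≤ B) (hB0 : 0 ≤ B) {τ x₀ : ℝ} (hτ : 0 ≤ τ)
    (hx₀ : x₀ ∈ Icc 0 B) :
    ∃ g : ℝ → ℝ, g τ = x₀ ∧ ∀ t ∈ Ici τ, g t ∈ Icc 0 B ∧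
      HasDerivWithinAt g (Frhs a b c δ₁ δ₂ t (g t)) (Ici τ) t ∧
      (τ < t → HasDerivAt g (Frhs a b c δ₁ δ₂ t (g t)) t) := by
  set h := hstep a b c B with hhdef
  have hh0 : 0 < h := hstep_pos ha hb hc hB0
  -- choice function for local solutions
  set F : ℝ → ℝ → (ℝ → ℝ) := fun τ' x' =>
    if hcond : 0 ≤ τ' ∧ x' ∈ Icc 0 B then
      (locex ha hb hc hδ₁ hδ₂ hB0 hcond.1 hcond.2).choose
    else fun _ => 0 with hF
  have Fspec : ∀ τ' x', 0 ≤ τ' → x' ∈ Icc 0 B →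
      F τ' x' τ' = x' ∧ ∀ t ∈ Icc τ' (τ' + h),
        HasDerivWithinAt (F τ' x') (Frhs a b c δ₁ δ₂ t (F τ' x' t)) (Icc τ' (τ' + h)) t := by
    intro τ' x' h1 h2
    rw [hF]
    simp only [dif_pos (And.intro h1 h2)]
    exact (locex ha hb hc hδ₁ hδ₂ hB0 h1 h2).choose_spec
  -- the sequence of local solutions
  set τn : ℕ → ℝ := fun n => τ + n * h with hτn
  have τn0 : τn 0 = τ := by simp [hτn]
  have τn_succ : ∀ n, τn (n + 1) = τn n + h := by
    intro n; simp only [hτn]; push_cast; ring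
  have τn_nonneg : ∀ n, 0 ≤ τn n := by
    intro n; simp only [hτn]; positivity
  have τn_lt : ∀ n, τn n < τn (n + 1) := by
    intro n; rw [τn_succ]; linarith
  have τn_ge : ∀ n, τ ≤ τn n := by
    intro n; simp only [hτn]
    have : 0 ≤ (n : ℝ) * h := by positivity
    linarith
  set seq : ℕ → (ℝ → ℝ) := fun n => Nat.rec (F τ x₀) (fun n g => F (τn (n + 1)) (g (τn (n + 1)))) n
    with hseq
  have seq_succ : ∀ n, seq (n + 1) = F (τn (n + 1)) (seq n (τn (n + 1))) := fun n => rfl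
  -- the invariant
  have Inv : ∀ n, seq n (τn n) ∈ Icc 0 B ∧
      (∀ t ∈ Icc (τn n) (τn (n + 1)),
        HasDerivWithinAt (seq n) (Frhs a b c δ₁ δ₂ t (seq n t)) (Icc (τn n) (τn (n + 1))) t) ∧
      (∀ t ∈ Icc (τn n) (τn (n + 1)), seq n t ∈ Icc 0 B) := by
    intro n
    induction n with
    | zero =>
      obtain ⟨h1, h2⟩ := Fspec τ x₀ hτ hx₀
      have hst : seq 0 (τn 0) = x₀ := by rw [τn0]; exact h1
      have hderiv : ∀ t ∈ Icc (τn 0) (τn 1),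
          HasDerivWithinAt (seq 0) (Frhs a b c δ₁ δ₂ t (seq 0 t)) (Icc (τn 0) (τn 1)) t := by
        have : τn 1 = τ + h := by rw [τn_succ 0, τn0]
        rw [τn0, this]; exact h2
      refine ⟨hst ▸ hx₀, hderiv, ?_⟩
      intro t ht
      have := invariance ha hb hc hδ₁ hδ₂ (τn_nonneg 0) hderiv (hst ▸ hx₀.1) t ht
      refine ⟨this.1, le_trans this.2 ?_⟩
      rw [hst]
      exact max_le hx₀.2 hBr
    | succ m ih =>
      obtain ⟨ihs, ihd, ihm⟩ := ih
      have hend : seq m (τn (m + 1)) ∈ Icc 0 B :=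
        ihm (τn (m + 1)) ⟨(τn_lt m).le, le_refl _⟩
      obtain ⟨h1, h2⟩ := Fspec (τn (m + 1)) (seq m (τn (m + 1))) (τn_nonneg _) hend
      have hst : seq (m + 1) (τn (m + 1)) = seq m (τn (m + 1)) := by
        rw [seq_succ m]; exact h1
      have hderiv : ∀ t ∈ Icc (τn (m + 1)) (τn (m + 2)),
          HasDerivWithinAt (seq (m + 1)) (Frhs a b c δ₁ δ₂ t (seq (m + 1) t))
            (Icc (τn (m + 1)) (τn (m + 2))) t := by
        have he : τn (m + 2) = τn (m + 1) + h := τn_succ (m + 1)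
        rw [he]
        rw [seq_succ m]
        exact h2
      refine ⟨hst ▸ hend, hderiv, ?_⟩
      intro t ht
      have := invariance ha hb hc hδ₁ hδ₂ (τn_nonneg (m + 1)) hderiv (hst ▸ hend.1) t ht
      refine ⟨this.1, le_trans this.2 ?_⟩
      rw [hst]
      exact max_le hend.2 hBr
  -- junction equality
  have hjun : ∀ n, seq (n + 1) (τn (n + 1)) = seq n (τn (n + 1)) := by
    intro n
    obtain ⟨_, _, ihm⟩ := Inv n
    have hend : seq n (τn (n + 1)) ∈ Icc 0 B := ihm (τn (n + 1)) ⟨(τn_lt n).le, le_refl _⟩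
    rw [seq_succ n]
    exact (Fspec (τn (n + 1)) (seq n (τn (n + 1))) (τn_nonneg _) hend).1
  -- the glued function
  set idx : ℝ → ℕ := fun t => (⌊(t - τ) / h⌋).toNat with hidx
  set G : ℝ → ℝ := fun t => seq (idx t) t with hG
  have idx_eq : ∀ (n : ℕ) (t : ℝ), τn n ≤ t → t < τn (n + 1) → idx t = n := by
    intro n t h1 h2
    have hd1 : (n : ℝ) ≤ (t - τ) / h := by
      rw [le_div_iff₀ hh0]
      simp only [hτn] at h1; linarith
    have hd2 : (t - τ) / h < n + 1 := by
      rw [div_lt_iff₀ hh0]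
      simp only [hτn] at h2; push_cast at h2 ⊢; linarith
    have : ⌊(t - τ) / h⌋ = (n : ℤ) := by
      rw [Int.floor_eq_iff]
      constructor
      · exact_mod_cast hd1
      · push_cast; exact hd2
    simp [hidx, this]
  have idx_jun : ∀ (n : ℕ), idx (τn (n + 1)) = n + 1 := by
    intro n
    have : (τn (n + 1) - τ) / h = (n + 1 : ℝ) := by
      field_simp [hτn]
      simp only [hτn]; push_cast; ring
    have hfl : ⌊(τn (n + 1) - τ) / h⌋ = ((n : ℤ) + 1) := by
      rw [this]
      exact_mod_cast Int.floor_natCast (n + 1)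
    simp [hidx, hfl]
  have Gpiece : ∀ (n : ℕ), ∀ t ∈ Icc (τn n) (τn (n + 1)), G t = seq n t := by
    intro n t ht
    rcases lt_or_eq_of_le ht.2 with hlt | heq
    · rw [hG]; simp only [idx_eq n t ht.1 hlt]
    · subst heq
      rw [hG]
      simp only [idx_jun n]
      exact hjun n
  -- locating points
  have locate : ∀ t, τ ≤ t → τn (idx t) ≤ t ∧ t < τn (idx t + 1) := by
    intro t ht
    have h0' : 0 ≤ (t - τ) / h := div_nonneg (by linarith) hh0.le
    have hfl : (0:ℤ) ≤ ⌊(t - τ) / h⌋ := Int.floor_nonneg.mpr h0'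
    have hc1 : (⌊(t - τ) / h⌋ : ℝ) ≤ (t - τ) / h := Int.floor_le _
    have hc2 : (t - τ) / h < ⌊(t - τ) / h⌋ + 1 := Int.lt_floor_add_one _
    have hcast : ((idx t : ℕ) : ℝ) = (⌊(t - τ) / h⌋ : ℝ) := by
      simp only [hidx]
      exact_mod_cast congrArg (fun z : ℤ => (z : ℝ)) (Int.toNat_of_nonneg hfl)
    constructor
    · simp only [hτn]
      rw [le_div_iff₀ hh0] at hc1
      rw [hcast] at *
      linarith [hc1]
    · simp only [hτn]
      rw [div_lt_iff₀ hh0] at hc2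
      push_cast
      push_cast at hcast
      rw [hcast]
      linarith [hc2]
  have hGτ : G τ = x₀ := by
    have hmem : τ ∈ Icc (τn 0) (τn 1) := ⟨τn0.le, by rw [← τn0]; exact (τn_lt 0).le⟩
    have h1 : G τ = seq 0 τ := Gpiece 0 τ hmem
    have h2 : seq 0 τ = x₀ := (Fspec τ x₀ hτ hx₀).1
    rw [h1, h2]
  refine ⟨G, hGτ, ?_⟩
  intro t ht
  rw [mem_Ici] at ht
  obtain ⟨hl, hr⟩ := locate t ht
  set n := idx t with hn
  have hmem : t ∈ Icc (τn n) (τn (n + 1)) := ⟨hl, hr.le⟩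
  have hGt : G t = seq n t := Gpiece n t hmem
  have hval : G t ∈ Icc 0 B := by rw [hGt]; exact (Inv n).2.2 t hmem
  rcases lt_or_eq_of_le hl with hlt | heq
  · -- strictly inside a piece : full derivative
    have hIcc : Icc (τn n) (τn (n + 1)) ∈ 𝓝 t := Icc_mem_nhds hlt hr
    have hda : HasDerivAt (seq n) (Frhs a b c δ₁ δ₂ t (seq n t)) t :=
      ((Inv n).2.1 t hmem).hasDerivAt hIcc
    have hev : G =ᶠ[𝓝 t] seq n := by
      filter_upwards [hIcc] with x hx using Gpiece n x hx
    have hda' : HasDerivAt G (Frhs a b c δ₁ δ₂ t (G t)) t := by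
      rw [hGt]
      exact hda.congr_of_eventuallyEq hev
    exact ⟨hval, hda'.hasDerivWithinAt, fun _ => hda'⟩
  · -- t is a grid point
    have hR : HasDerivWithinAt G (Frhs a b c δ₁ δ₂ t (G t)) (Icc (τn n) (τn (n + 1))) t := by
      have hbase := (Inv n).2.1 t hmem
      rw [hGt]
      exact hbase.congr (fun x hx => Gpiece n x hx) hGt
    rcases Nat.eq_zero_or_pos n with h0 | hpos
    · -- n = 0 : t = τ, only the one-sided derivative is claimed
      have htτ : t = τ := by rw [← heq, h0, τn0]
      have hIcc : Icc (τn n) (τn (n + 1)) ∈ 𝓝[Set.Ici τ] t := by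
        rw [htτ] at hmem hr ⊢
        exact Icc_mem_nhdsGE_of_mem ⟨hmem.1, hr⟩
      refine ⟨hval, hR.mono_of_mem_nhdsWithin hIcc, ?_⟩
      intro hcon
      exact absurd htτ (by intro hh; rw [hh] at hcon; exact lt_irrefl τ hcon)
    · -- n = m + 1 : interior grid point, glue two pieces
      obtain ⟨m, hm⟩ := Nat.exists_eq_succ_of_ne_zero (Nat.pos_iff_ne_zero.mp hpos)
      have htm : t = τn (m + 1) := by rw [← heq, hm]
      have hmemL : t ∈ Icc (τn m) (τn (m + 1)) := by
        rw [htm]; exact ⟨(τn_lt m).le, le_refl _⟩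
      have hGtL : G t = seq m t := Gpiece m t hmemL
      have hLder : HasDerivWithinAt G (Frhs a b c δ₁ δ₂ t (G t))
          (Icc (τn m) (τn (m + 1))) t := by
        have hbase := (Inv m).2.1 t hmemL
        rw [hGtL]
        exact hbase.congr (fun x hx => Gpiece m x hx) hGtL
      have hLnhds : Icc (τn m) (τn (m + 1)) ∈ 𝓝[Set.Iic t] t := by
        rw [htm]
        exact Icc_mem_nhdsLE_of_mem ⟨τn_lt m, le_refl _⟩
      have hL' : HasDerivWithinAt G (Frhs a b c δ₁ δ₂ t (G t)) (Set.Iic t) t :=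
        hLder.mono_of_mem_nhdsWithin hLnhds
      have hRnhds : Icc (τn n) (τn (n + 1)) ∈ 𝓝[Set.Ici t] t := by
        have hmemIco : t ∈ Ico (τn n) (τn (n + 1)) := ⟨heq.le, hr⟩
        exact Icc_mem_nhdsGE_of_mem hmemIco
      have hR' : HasDerivWithinAt G (Frhs a b c δ₁ δ₂ t (G t)) (Set.Ici t) t :=
        hR.mono_of_mem_nhdsWithin hRnhds
      have huniv := hL'.union hR'
      rw [Iic_union_Ici] at huniv
      have hda : HasDerivAt G (Frhs a b c δ₁ δ₂ t (G t)) t := hasDerivWithinAt_univ.mp huniv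
      exact ⟨hval, hda.hasDerivWithinAt, fun _ => hda⟩

include ha hb hδ₁ in
lemma uniq {B s p : ℝ} (hB0 : 0 ≤ B) (hs0 : 0 ≤ s) {u w : ℝ → ℝ}
    (hu : ContinuousOn u (Icc s p))
    (hu' : ∀ t ∈ Ico s p, HasDerivWithinAt u (Frhs a b c δ₁ δ₂ t (u t)) (Ici t) t)
    (hum : ∀ t ∈ Ico s p, u t ∈ Icc (0:ℝ) B)
    (hw : ContinuousOn w (Icc s p))
    (hw' : ∀ t ∈ Ico s p, HasDerivWithinAt w (Frhs a b c δ₁ δ₂ t (w t)) (Ici t) t)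
    (hwm : ∀ t ∈ Ico s p, w t ∈ Icc (0:ℝ) B)
    (heq : u s = w s) : EqOn u w (Icc s p) := by
  set V : ℝ → ℝ → ℝ := fun t x =>
    -a * x ^ 2 + b * x * Real.exp (-δ₁ * max t 0) + c * Real.exp (-δ₂ * max t 0) with hV
  have hVeq : ∀ t : ℝ, 0 ≤ t → ∀ x, V t x = Frhs a b c δ₁ δ₂ t x := by
    intro t ht x
    simp only [hV]
    unfold Frhs
    rw [max_eq_left ht]
  set K : NNReal := Real.toNNReal (2 * a * B + b) with hK
  have hKcoe : (K : ℝ) = 2 * a * B + b := Real.coe_toNNReal _ (by positivity)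
  have hlip : ∀ t : ℝ, LipschitzOnWith K (V t) (Icc (0:ℝ) B) := by
    intro t
    rw [lipschitzOnWith_iff_dist_le_mul]
    intro x hx y hy
    rw [Real.dist_eq, Real.dist_eq, hKcoe]
    have he1 : Real.exp (-δ₁ * max t 0) ≤ 1 :=
      Real.exp_le_one_iff.mpr (by nlinarith [le_max_right t 0])
    have he1' : 0 < Real.exp (-δ₁ * max t 0) := Real.exp_pos _
    have hfact : V t x - V t y
        = (x - y) * (-a * (x + y) + b * Real.exp (-δ₁ * max t 0)) := by
      simp only [hV]; ring
    rw [hfact, abs_mul]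
    rw [mul_comm (2 * a * B + b) |x - y|]
    apply mul_le_mul_of_nonneg_left _ (abs_nonneg _)
    have h1 : |(-a * (x + y) + b * Real.exp (-δ₁ * max t 0))|
        ≤ |a * (x + y)| + |b * Real.exp (-δ₁ * max t 0)| := by
      calc _ ≤ |(-a * (x + y))| + |b * Real.exp (-δ₁ * max t 0)| := abs_add_le _ _
        _ = _ := by rw [neg_mul, abs_neg]
    have h2 : |a * (x + y)| ≤ a * (2 * B) := by
      rw [abs_mul, abs_of_pos ha]
      apply mul_le_mul_of_nonneg_left _ ha.le
      calc |x + y| ≤ |x| + |y| := abs_add_le _ _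
        _ ≤ 2 * B := by
            have hx' : |x| ≤ B := abs_le.mpr ⟨by linarith [hx.1], hx.2⟩
            have hy' : |y| ≤ B := abs_le.mpr ⟨by linarith [hy.1], hy.2⟩
            linarith
    have h3 : |b * Real.exp (-δ₁ * max t 0)| ≤ b := by
      rw [abs_mul, abs_of_pos hb, abs_of_pos he1']
      nlinarith
    linarith
  have hueq : ∀ t ∈ Ico s p, HasDerivWithinAt u (V t (u t)) (Ici t) t := by
    intro t ht
    rw [hVeq t (le_trans hs0 ht.1)]
    exact hu' t ht
  have hweq : ∀ t ∈ Ico s p, HasDerivWithinAt w (V t (w t)) (Ici t) t := by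
    intro t ht
    rw [hVeq t (le_trans hs0 ht.1)]
    exact hw' t ht
  exact ODE_solution_unique_of_mem_Icc_right (fun t _ => hlip t) hu hueq hum hw hweq hwm heq

end Main

/-- **Lemma 1 (comparison lemma).**
For the scalar ODE `v̇ = -a v² + b v e^{-δ₁ t} + c e^{-δ₂ t}` with `a, b, c, δ₁, δ₂ > 0`,
initial time `t₀ ≥ 0` and initial value `v₀ ≥ 0`:
every maximal solution is defined on all of `[t₀, ∞)` (i.e., any solution on a finite
interval `[t₀, T)` extends to a solution on `[t₀, ∞)`), and every solution defined on
`[t₀, ∞)` is bounded there and tends to `0` as `t → ∞`. -/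
theorem comparison_lemma_global_bounded_tendsto_zero
    (a b c δ₁ δ₂ t₀ v₀ : ℝ)
    (ha : 0 < a) (hb : 0 < b) (hc : 0 < c) (hδ₁ : 0 < δ₁) (hδ₂ : 0 < δ₂)
    (ht₀ : 0 ≤ t₀) (hv₀ : 0 ≤ v₀) :
    -- prolongability to ∞: any solution on [t₀, T) extends to a solution on [t₀, ∞)
    (∀ T : ℝ, t₀ < T → ∀ v : ℝ → ℝ, v t₀ = v₀ →
      (∀ t ∈ Set.Ico t₀ T,
        HasDerivAt v (-a * (v t) ^ 2 + b * (v t) * Real.exp (-δ₁ * t)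
          + c * Real.exp (-δ₂ * t)) t) →
      ∃ w : ℝ → ℝ, w t₀ = v₀ ∧
        (∀ t ∈ Set.Ici t₀,
          HasDerivAt w (-a * (w t) ^ 2 + b * (w t) * Real.exp (-δ₁ * t)
            + c * Real.exp (-δ₂ * t)) t) ∧
        ∀ t ∈ Set.Ico t₀ T, w t = v t) ∧
    -- boundedness and convergence to zero of every solution on [t₀, ∞)
    (∀ v : ℝ → ℝ, v t₀ = v₀ →
      (∀ t ∈ Set.Ici t₀,
        HasDerivAt v (-a * (v t) ^ 2 + b * (v t) * Real.exp (-δ₁ * t)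
          + c * Real.exp (-δ₂ * t)) t) →
      (∃ M : ℝ, ∀ t ∈ Set.Ici t₀, |v t| ≤ M) ∧
      Filter.Tendsto v Filter.atTop (nhds 0)) := by
  have hFr : ∀ (v : ℝ → ℝ) (t : ℝ),
      (-a * (v t) ^ 2 + b * (v t) * Real.exp (-δ₁ * t) + c * Real.exp (-δ₂ * t))
        = Frhs a b c δ₁ δ₂ t (v t) := fun v t => rfl
  set B := max v₀ (rroot a b c) with hBdef
  have hBr : rroot a b c ≤ B := le_max_right _ _
  have hB0 : 0 ≤ B := le_trans hv₀ (le_max_left _ _)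
  constructor
  · -- extension
    intro T hT v hv0 hv'
    set s := (t₀ + T) / 2 with hs
    have hts : t₀ < s := by rw [hs]; linarith
    have hsT : s < T := by rw [hs]; linarith
    have hs0 : 0 ≤ s := by linarith
    -- invariance of v on compact subintervals of [t₀, T)
    have hvIcc : ∀ p, p < T → ∀ t ∈ Icc t₀ p, v t ∈ Icc 0 B := by
      intro p hp t ht
      have hder : ∀ t' ∈ Icc t₀ p, HasDerivWithinAt v (Frhs a b c δ₁ δ₂ t' (v t'))
          (Icc t₀ p) t' := by
        intro t' ht'
        have := hv' t' ⟨ht'.1, lt_of_le_of_lt ht'.2 hp⟩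
        rw [hFr] at this
        exact this.hasDerivWithinAt
      have := invariance ha hb hc hδ₁ hδ₂ ht₀ hder (hv0 ▸ hv₀) t ht
      rw [hv0] at this
      exact ⟨this.1, le_trans this.2 (max_le (le_max_left _ _) hBr)⟩
    have hvs : v s ∈ Icc 0 B := hvIcc s hsT s ⟨hts.le, le_refl _⟩
    obtain ⟨g, hgs, hg⟩ := globex ha hb hc hδ₁ hδ₂ hBr hB0 hs0 hvs
    -- g agrees with v on [s, T)
    have hagree : ∀ t ∈ Ico s T, g t = v t := by
      intro t ht
      have hIccsub : Icc s t ⊆ Ico t₀ T := fun x hx =>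
        ⟨le_trans hts.le hx.1, lt_of_le_of_lt hx.2 ht.2⟩
      have hicos : Ico s t ⊆ Ico t₀ T := fun x hx => ⟨le_trans hts.le hx.1, lt_trans hx.2 ht.2⟩
      have hucont : ContinuousOn v (Icc s t) := fun x hx => by
        have := hv' x (hIccsub hx)
        exact this.continuousAt.continuousWithinAt
      have hu' : ∀ x ∈ Ico s t, HasDerivWithinAt v (Frhs a b c δ₁ δ₂ x (v x)) (Ici x) x := by
        intro x hx
        have := hv' x (hicos hx)
        rw [hFr] at this
        exact this.hasDerivWithinAt
      have hum : ∀ x ∈ Ico s t, v x ∈ Icc (0:ℝ) B := fun x hx =>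
        hvIcc x (lt_trans hx.2 ht.2) x ⟨le_trans hts.le hx.1, le_refl _⟩
      have hwcont : ContinuousOn g (Icc s t) := fun x hx =>
        ((hg x (mem_Ici.mpr (le_trans hx.1 (le_refl _)))).2.1).continuousWithinAt.mono
          Icc_subset_Ici_self
      have hw' : ∀ x ∈ Ico s t, HasDerivWithinAt g (Frhs a b c δ₁ δ₂ x (g x)) (Ici x) x := by
        intro x hx
        exact ((hg x (mem_Ici.mpr hx.1)).2.1).mono (fun y hy => le_trans hx.1 hy)
      have hwm : ∀ x ∈ Ico s t, g x ∈ Icc (0:ℝ) B := fun x hx =>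
        (hg x (mem_Ici.mpr hx.1)).1
      have heqs : v s = g s := hgs.symm
      exact (uniq ha hb hδ₁ hB0 hs0 hucont hu' hum hwcont hw' hwm heqs ⟨ht.1, le_refl _⟩).symm
    -- assemble the extension
    refine ⟨fun t => if t < T then v t else g t, ?_, ?_, ?_⟩
    · simp only [if_pos hT, hv0]
    · intro t ht
      rw [mem_Ici] at ht
      by_cases hcase : t < T
      · have hda := hv' t ⟨ht, hcase⟩
        have hev : (fun t => if t < T then v t else g t) =ᶠ[𝓝 t] v := by
          filter_upwards [Iio_mem_nhds hcase] with x hx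
          exact if_pos hx
        simp only [if_pos hcase]
        exact HasDerivAt.congr_of_eventuallyEq hda hev
      · push_neg at hcase
        have htsT : s < t := lt_of_lt_of_le hsT hcase
        have hda := (hg t (mem_Ici.mpr htsT.le)).2.2 htsT
        have hev : (fun t => if t < T then v t else g t) =ᶠ[𝓝 t] g := by
          filter_upwards [Ioi_mem_nhds htsT] with x hx
          by_cases hxT : x < T
          · rw [if_pos hxT]
            exact (hagree x ⟨le_of_lt hx, hxT⟩).symm
          · rw [if_neg hxT]
        simp only [if_neg (not_lt.mpr hcase)]
        exact HasDerivAt.congr_of_eventuallyEq hda hev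
    · intro t ht
      exact if_pos ht.2
  · -- boundedness and convergence
    intro v hv0 hv'
    have hbd : ∀ t ∈ Ici t₀, v t ∈ Icc 0 B := by
      intro t ht
      rw [mem_Ici] at ht
      have hder : ∀ t' ∈ Icc t₀ t, HasDerivWithinAt v (Frhs a b c δ₁ δ₂ t' (v t'))
          (Icc t₀ t) t' := by
        intro t' ht'
        have := hv' t' (mem_Ici.mpr ht'.1)
        rw [hFr] at this
        exact this.hasDerivWithinAt
      have := invariance ha hb hc hδ₁ hδ₂ ht₀ hder (hv0 ▸ hv₀) t ⟨ht, le_refl _⟩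
      rw [hv0] at this
      exact ⟨this.1, le_trans this.2 (max_le (le_max_left _ _) hBr)⟩
    refine ⟨⟨B, fun t ht => abs_le.mpr ⟨by linarith [(hbd t ht).1], (hbd t ht).2⟩⟩, ?_⟩
    rw [NormedAddCommGroup.tendsto_nhds_zero]
    intro ε hε
    set k := a * ε ^ 2 / 4 with hk
    have hk0 : 0 < k := by rw [hk]; positivity
    -- choose T₁
    have htend1 : Tendsto (fun t : ℝ => b * Real.exp (-δ₁ * t)) atTop (𝓝 0) := by
      have h1 : Tendsto (fun t : ℝ => δ₁ * t) atTop atTop :=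
        Tendsto.const_mul_atTop hδ₁ tendsto_id
      have h2 : Tendsto (fun t : ℝ => Real.exp (-(δ₁ * t))) atTop (𝓝 0) :=
        Real.tendsto_exp_neg_atTop_nhds_zero.comp h1
      have h3 : Tendsto (fun t : ℝ => b * Real.exp (-(δ₁ * t))) atTop (𝓝 (b * 0)) :=
        h2.const_mul b
      rw [mul_zero] at h3
      simpa [neg_mul] using h3
    have htend2 : Tendsto (fun t : ℝ => c * Real.exp (-δ₂ * t)) atTop (𝓝 0) := by
      have h1 : Tendsto (fun t : ℝ => δ₂ * t) atTop atTop :=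
        Tendsto.const_mul_atTop hδ₂ tendsto_id
      have h2 : Tendsto (fun t : ℝ => Real.exp (-(δ₂ * t))) atTop (𝓝 0) :=
        Real.tendsto_exp_neg_atTop_nhds_zero.comp h1
      have h3 : Tendsto (fun t : ℝ => c * Real.exp (-(δ₂ * t))) atTop (𝓝 (c * 0)) :=
        h2.const_mul c
      rw [mul_zero] at h3
      simpa [neg_mul] using h3
    have hev1 : ∀ᶠ t in atTop, b * Real.exp (-δ₁ * t) < a * ε / 2 :=
      htend1.eventually (eventually_lt_nhds (by positivity))
    have hev2 : ∀ᶠ t in atTop, c * Real.exp (-δ₂ * t) < k :=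
      htend2.eventually (eventually_lt_nhds hk0)
    have hev0 : ∀ᶠ t in atTop, t₀ ≤ t := eventually_ge_atTop t₀
    obtain ⟨T₁, hT₁⟩ := eventually_atTop.mp (hev1.and (hev2.and hev0))
    have hT₁t₀ : t₀ ≤ T₁ := (hT₁ T₁ le_rfl).2.2
    -- there is a time T₂ ≥ T₁ with v T₂ < ε
    have hex : ∃ T₂, T₁ ≤ T₂ ∧ v T₂ < ε := by
      by_contra hcon
      push_neg at hcon
      have hder : ∀ t : ℝ, T₁ ≤ t → HasDerivAt (fun x => v x + k * x)
          (Frhs a b c δ₁ δ₂ t (v t) + k) t := by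
        intro t ht
        have h1 := hv' t (mem_Ici.mpr (le_trans hT₁t₀ ht))
        rw [hFr] at h1
        have h2 : HasDerivAt (fun x : ℝ => k * x) k t := by
          simpa using (hasDerivAt_id t).const_mul k
        exact h1.add h2
      have hanti : AntitoneOn (fun x => v x + k * x) (Ici T₁) := by
        apply antitoneOn_of_deriv_nonpos (convex_Ici T₁)
        · exact fun t ht => (hder t ht).continuousAt.continuousWithinAt
        · intro t htint
          rw [interior_Ici] at htint
          exact (hder t htint.le).differentiableAt.differentiableWithinAt
        · intro t htint
          rw [interior_Ici] at htint
          rw [(hder t htint.le).deriv]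
          obtain ⟨he1, he2, _⟩ := hT₁ t htint.le
          have hvt : ε ≤ v t := hcon t htint.le
          have hv0' : 0 ≤ v t := (hbd t (mem_Ici.mpr (le_trans hT₁t₀ htint.le))).1
          rw [hk]
          unfold Frhs
          nlinarith [mul_le_mul_of_nonneg_left he1.le hv0',
            mul_le_mul_of_nonneg_left hvt (mul_pos ha hε).le, sq_nonneg (v t - ε)]
      set t₂ := T₁ + (v T₁ + 1) / k with ht₂def
      have hvT₁ : 0 ≤ v T₁ := (hbd T₁ (mem_Ici.mpr hT₁t₀)).1
      have ht₂ : T₁ ≤ t₂ := by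
        rw [ht₂def]
        have : 0 ≤ (v T₁ + 1) / k := by positivity
        linarith
      have hmono := hanti (mem_Ici.mpr (le_refl T₁)) (mem_Ici.mpr ht₂) ht₂
      have hkt₂ : k * t₂ = k * T₁ + v T₁ + 1 := by
        rw [ht₂def]
        field_simp
        ring
      have hvt₂ : 0 ≤ v t₂ := (hbd t₂ (mem_Ici.mpr (le_trans hT₁t₀ ht₂))).1
      simp only at hmono
      linarith [hmono, hkt₂]
    obtain ⟨T₂, hT₂₁, hT₂v⟩ := hex
    -- barrier : v stays below ε after T₂
    have hbar : ∀ t, T₂ ≤ t → v t < ε := by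
      by_contra hcon
      push_neg at hcon
      obtain ⟨t₁, ht₁, hvt₁⟩ := hcon
      have hT₂t₀ : t₀ ≤ T₂ := le_trans hT₁t₀ hT₂₁
      set S := Ici T₂ ∩ v ⁻¹' Ici ε with hS
      have hcont : ContinuousOn v (Ici T₂) := fun x hx =>
        (hv' x (mem_Ici.mpr (le_trans hT₂t₀ hx))).continuousAt.continuousWithinAt
      have hSc : IsClosed S := hcont.preimage_isClosed_of_isClosed isClosed_Ici isClosed_Ici
      have hSne : S.Nonempty := ⟨t₁, ht₁, hvt₁⟩
      have hSb : BddBelow S := ⟨T₂, fun x hx => hx.1⟩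
      set σ := sInf S with hσdef
      have hσ : σ ∈ S := hSc.csInf_mem hSne hSb
      have hvσ : ε ≤ v σ := hσ.2
      have hT₂σ : T₂ < σ := by
        rcases lt_or_eq_of_le (mem_Ici.mp hσ.1) with h' | h'
        · exact h'
        · exfalso; rw [← h'] at hvσ; linarith
      obtain ⟨he1, he2, _⟩ := hT₁ σ (le_trans hT₂₁ hσ.1)
      have hd : Frhs a b c δ₁ δ₂ σ (v σ) < 0 := by
        have hv0' : 0 ≤ v σ := (hbd σ (mem_Ici.mpr (le_trans hT₂t₀ hσ.1))).1
        unfold Frhs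
        nlinarith [mul_le_mul_of_nonneg_left he1.le hv0',
          mul_le_mul_of_nonneg_left hvσ (mul_pos ha hε).le, sq_nonneg (v σ - ε),
          mul_pos ha hε]
      have hderσ := hv' σ (mem_Ici.mpr (le_trans hT₂t₀ hσ.1))
      rw [hFr] at hderσ
      obtain ⟨x, hx, hvx⟩ := left_val_gt (hderσ.hasDerivWithinAt (s := Ioo T₂ σ)) hd hT₂σ
        (subset_refl _)
      have hxS : x ∈ S := ⟨mem_Ici.mpr hx.1.le, by simp only [mem_preimage, mem_Ici]; linarith⟩
      have := csInf_le hSb hxS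
      rw [← hσdef] at this
      linarith [hx.2]
    filter_upwards [eventually_ge_atTop (max T₂ t₀)] with t ht
    have h1 : v t < ε := hbar t (le_trans (le_max_left _ _) ht)
    have h2 : 0 ≤ v t := (hbd t (mem_Ici.mpr (le_trans (le_max_right _ _) ht))).1
    rw [Real.norm_eq_abs, abs_of_nonneg h2]
    exact h1
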